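/- Let H be a Hopf algebra over a field k which admits a faithful simple left module (i.e. a simple module with zero annihilator). Then the chain group C(H) is the trivial group. -/

import Mathlib

open TensorProduct

noncomputable section

namespace Paper

universe u

section TensorDual

variable (k : Type*) [CommSemiring k]
variable (A : Type*) [Semiring A] [Algebra k A]
variable (M N : Type*) [AddCommMonoid M] [Module k M] [Module A M]
  [IsScalarTower k A M] [SMulCommClass k A M]
  [AddCommMonoid N] [Module k N] [Module A N] [IsScalarTower k A N] [SMulCommClass k A N]

/-- The representation of `A ⊗[k] A` on `M ⊗[k] N`. -/
def tensorRep : A ⊗[k] A →ₐ[k] Module.End k (M ⊗[k] N) :=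
  (Module.endTensorEndAlgHom (R := k) (S := k) (A := k) (M := M) (N := N)).comp
    (Algebra.TensorProduct.map (Algebra.lsmul k k M) (Algebra.lsmul k k N))

/-- The module structure on `M ⊗[k] N` obtained by letting `A` act through an algebra
map `Δ : A →ₐ[k] A ⊗[k] A` (e.g. the comultiplication of a bialgebra). -/
def diagModule (Δ : A →ₐ[k] A ⊗[k] A) : Module A (M ⊗[k] N) :=
  Module.compHom (M ⊗[k] N) ((tensorRep k A M N).comp Δ).toRingHom

variable {k A} in
/-- The contragredient representation on the full linear dual, the action being through an
algebra anti-endomorphism `σ` (e.g. the antipode of a Hopf algebra). -/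
def dualRep (σ : A →ₐ[k] Aᵐᵒᵖ) : A →ₐ[k] Module.End k (Module.Dual k M) where
  toFun a := ((Algebra.lsmul k k M) (σ a).unop).dualMap
  map_one' := by
    ext φ v
    simp [LinearMap.dualMap_apply]
  map_mul' a b := by
    ext φ v
    simp [LinearMap.dualMap_apply, MulOpposite.unop_mul, map_mul, Module.End.mul_apply]
  map_zero' := by
    ext φ v
    simp [LinearMap.dualMap_apply]
  map_add' a b := by
    ext φ v
    simp [LinearMap.dualMap_apply, MulOpposite.unop_add, map_add, LinearMap.add_apply]
  commutes' r := by
    ext φ v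
    simp [LinearMap.dualMap_apply, Module.algebraMap_end_apply]

variable {k A} in
/-- The module structure on the full linear dual `M*` of a module `M`, with the action through
an algebra anti-endomorphism `σ` : `(a • f) v = f (σ a • v)`. -/
def dualModule (σ : A →ₐ[k] Aᵐᵒᵖ) : Module A (Module.Dual k M) :=
  Module.compHom (Module.Dual k M) (dualRep M σ).toRingHom

end TensorDual

section Chain

variable (k : Type u) [Field k]
variable (A : Type u) [Ring A] [Algebra k A]

/-- A bundled simple left `A`-module (for an algebra `A` over a field `k`),
together with its (automatically unique) compatible `k`-vector space structure. -/
structure SimpleMod where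
  carrier : Type u
  [acg : AddCommGroup carrier]
  [modk : Module k carrier]
  [modA : Module A carrier]
  [tower : IsScalarTower k A carrier]
  [scc : SMulCommClass k A carrier]
  [simple : IsSimpleModule A carrier]

attribute [instance] SimpleMod.acg SimpleMod.modk SimpleMod.modA SimpleMod.tower
  SimpleMod.scc SimpleMod.simple

variable {k A}

/-- Isomorphism of simple modules. -/
def simpleModSetoid : Setoid (SimpleMod k A) where
  r M N := Nonempty (M.carrier ≃ₗ[A] N.carrier)
  iseqv := ⟨fun _ => ⟨LinearEquiv.refl _ _⟩, fun ⟨e⟩ => ⟨e.symm⟩,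
    fun ⟨e⟩ ⟨f⟩ => ⟨e.trans f⟩⟩

/-- The type of isomorphism classes of simple left `A`-modules. -/
def SimpleModClass (k A : Type u) [Field k] [Ring A] [Algebra k A] : Type (u + 1) :=
  Quotient (simpleModSetoid (k := k) (A := A))

/-- The annihilator of (the module underlying) a simple module. -/
def ann (M : SimpleMod k A) : Set A := (Module.annihilator A M.carrier : Ideal A)

/-- The annihilator of a tensor product of two modules, the algebra acting diagonally through
the comultiplication `Δ`. -/
def tensorAnn (Δ : A →ₐ[k] A ⊗[k] A) (M N : SimpleMod k A) : Set A :=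
  letI : Module A (M.carrier ⊗[k] N.carrier) := diagModule k A M.carrier N.carrier Δ
  (Module.annihilator A (M.carrier ⊗[k] N.carrier) : Ideal A)

/-- The annihilator of the dual (contragredient) module of `M`: the set of elements `a` whose
action on every functional `φ` (namely `v ↦ φ (σ a • v)`, where `σ` is the antipode) is zero. -/
def dualAnn (σ : A → A) (M : SimpleMod k A) : Set A :=
  {a : A | ∀ (φ : Module.Dual k M.carrier) (v : M.carrier), φ (σ a • v) = 0}

variable (k A) in
/-- The relators defining the chain group of `A` (with respect to comultiplication `Δ`,
antipode `σ` and counit `ε`): one generator per isomorphism class of simple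
`A`-modules; `g ε = 1` for the trivial module `ε`; `g M = g M' * g M''` whenever `M` is weakly
contained in `M' ⊗ M''`; and `g P = (g M)⁻¹` whenever `P` is weakly contained in the
dual of `M`. -/
def chainRels (Δ : A →ₐ[k] A ⊗[k] A) (σ : A → A) (ε : A →ₐ[k] k) :
    Set (FreeGroup (SimpleModClass k A)) :=
  {w | ∃ M : SimpleMod k A,
      (∀ (a : A) (v : M.carrier), a • v = ε a • v) ∧ w = FreeGroup.of ⟦M⟧} ∪
  {w | ∃ M M' M'' : SimpleMod k A, tensorAnn Δ M' M'' ⊆ ann M ∧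
      w = FreeGroup.of ⟦M⟧ * (FreeGroup.of ⟦M'⟧ * FreeGroup.of ⟦M''⟧)⁻¹} ∪
  {w | ∃ P M : SimpleMod k A, dualAnn σ M ⊆ ann P ∧
      w = FreeGroup.of ⟦P⟧ * FreeGroup.of ⟦M⟧}

variable (k A) in
/-- The chain group of `A` (with respect to the given comultiplication, antipode and counit),
presented by generators and relations. -/
def ChainGroup (Δ : A →ₐ[k] A ⊗[k] A) (σ : A → A) (ε : A →ₐ[k] k) : Type (u + 1) :=
  PresentedGroup (chainRels k A Δ σ ε)

instance (Δ : A →ₐ[k] A ⊗[k] A) (σ : A → A) (ε : A →ₐ[k] k) :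
    Group (ChainGroup k A Δ σ ε) :=
  inferInstanceAs (Group (PresentedGroup _))

/-- The generator of the chain group attached to a simple module. -/
def gen (Δ : A →ₐ[k] A ⊗[k] A) (σ : A → A) (ε : A →ₐ[k] k) (M : SimpleMod k A) :
    ChainGroup k A Δ σ ε :=
  PresentedGroup.of ⟦M⟧

end Chain

end Paper

end

noncomputable section

namespace ChainTrivAux

open Paper

universe v

variable (k H : Type v) [Field k] [Ring H] [HopfAlgebra k H]

/-- The `H`-module structure on `k` through the counit. -/
@[reducible] def trivModule : Module H k :=
  Module.compHom k (Bialgebra.counitAlgHom k H).toRingHom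

attribute [local instance] trivModule

lemma triv_smul_def (a : H) (v : k) :
    a • v = Bialgebra.counitAlgHom k H a * v := rfl

instance : IsScalarTower k H k := ⟨fun c a v => by
  show Bialgebra.counitAlgHom k H (c • a) * v = c • (Bialgebra.counitAlgHom k H a * v)
  rw [map_smul]
  simp only [smul_eq_mul]
  ring⟩

instance : SMulCommClass k H k := ⟨fun c a v => by
  show c • (Bialgebra.counitAlgHom k H a * v) = Bialgebra.counitAlgHom k H a * (c • v)
  simp only [smul_eq_mul]
  ring⟩

instance : IsSimpleModule H k := by
  haveI : Nontrivial (Submodule H k) := ⟨⊥, ⊤, fun h => by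
    have h1 : (1 : k) ∈ (⊥ : Submodule H k) := h ▸ Submodule.mem_top
    simpa using h1⟩
  refine { eq_bot_or_eq_top := ?_ }
  intro N
  rcases eq_or_ne N ⊥ with h | h
  · exact Or.inl h
  · refine Or.inr (Submodule.eq_top_iff'.mpr fun y => ?_)
    obtain ⟨x, hxN, hx0⟩ := Submodule.exists_mem_ne_zero_of_ne_bot h
    have hy : (algebraMap k H (y * x⁻¹)) • x = y := by
      rw [triv_smul_def, AlgHom.commutes]
      simp [Algebra.algebraMap_self_apply, mul_assoc, inv_mul_cancel₀ hx0]
    exact hy ▸ N.smul_mem _ hxN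

/-- The trivial one-dimensional module, `H` acting on `k` through the counit. -/
@[reducible] def trivMod : SimpleMod k H := { carrier := k }

lemma trivMod_smul (a : H) (v : (trivMod k H).carrier) :
    a • v = Bialgebra.counitAlgHom k H a * v := rfl

variable {k H}

lemma tensorAnn_triv_subset (M : SimpleMod k H)
    (hM : Module.annihilator H M.carrier = ⊥) (P : SimpleMod k H) :
    tensorAnn (Bialgebra.comulAlgHom k H) M (trivMod k H) ⊆ ann P := by
  intro a ha
  suffices h : a = 0 by
    have h0 : (0 : H) ∈ (Module.annihilator H P.carrier : Ideal H) :=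
      (Module.annihilator H P.carrier).zero_mem
    simpa [ann, h] using h0
  letI : Module H (M.carrier ⊗[k] (trivMod k H).carrier) :=
    diagModule k H M.carrier (trivMod k H).carrier (Bialgebra.comulAlgHom k H)
  have ha' := Module.mem_annihilator.mp ha
  have ha'' : ∀ x : M.carrier ⊗[k] (trivMod k H).carrier,
      (tensorRep k H M.carrier (trivMod k H).carrier)
        (Bialgebra.comulAlgHom k H a) x = 0 := fun x => ha' x
  have key : ∀ v : M.carrier, a • v = 0 := by
    intro v
    let contract : M.carrier ⊗[k] (trivMod k H).carrier →ₗ[k] M.carrier :=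
      TensorProduct.lift ((LinearMap.lsmul k M.carrier).flip)
    let contractH : H ⊗[k] k →ₗ[k] H :=
      TensorProduct.lift ((LinearMap.lsmul k H).flip)
    let actionV : H →ₗ[k] M.carrier :=
      { toFun := fun b => b • v
        map_add' := fun b b' => add_smul b b' v
        map_smul' := fun c b => smul_assoc c b v }
    let L1 : H ⊗[k] H →ₗ[k] M.carrier :=
      contract ∘ₗ (LinearMap.applyₗ (v ⊗ₜ (1 : (trivMod k H).carrier))) ∘ₗ
        (tensorRep k H M.carrier (trivMod k H).carrier).toLinearMap
    let L2 : H ⊗[k] H →ₗ[k] M.carrier :=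
      actionV ∘ₗ contractH ∘ₗ
        LinearMap.lTensor H ((Bialgebra.counitAlgHom k H).toLinearMap)
    have hL : L1 = L2 := by
      apply TensorProduct.ext'
      intro b b'
      show contract ((tensorRep k H M.carrier (trivMod k H).carrier) (b ⊗ₜ b')
          (v ⊗ₜ (1 : (trivMod k H).carrier))) =
        actionV (contractH (b ⊗ₜ (Bialgebra.counitAlgHom k H b')))
      have h1 : (tensorRep k H M.carrier (trivMod k H).carrier) (b ⊗ₜ b')
          (v ⊗ₜ (1 : (trivMod k H).carrier)) =
          (b • v) ⊗ₜ (b' • (1 : (trivMod k H).carrier)) := by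
        simp [tensorRep, Module.endTensorEndAlgHom_apply]
      rw [h1]
      show (b' • (1 : (trivMod k H).carrier)) • (b • v) =
        (Bialgebra.counitAlgHom k H b' • b) • v
      rw [trivMod_smul, mul_one, smul_assoc]
    have e1 : L1 (Coalgebra.comul (R := k) a) = 0 := by
      show contract ((tensorRep k H M.carrier (trivMod k H).carrier)
        (Coalgebra.comul (R := k) a) (v ⊗ₜ (1 : (trivMod k H).carrier))) = 0
      have hc : Coalgebra.comul (R := k) a = (Bialgebra.comulAlgHom k H) a := rfl
      rw [hc, ha'', map_zero]
    have e2 : L2 (Coalgebra.comul (R := k) a) = a • v := by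
      show actionV (contractH ((LinearMap.lTensor H
        ((Bialgebra.counitAlgHom k H).toLinearMap)) (Coalgebra.comul (R := k) a))) = a • v
      have hc : (LinearMap.lTensor H ((Bialgebra.counitAlgHom k H).toLinearMap))
          (Coalgebra.comul (R := k) a) = a ⊗ₜ[k] (1 : k) :=
        Coalgebra.lTensor_counit_comul a
      rw [hc]
      show ((1 : k) • a) • v = a • v
      rw [one_smul]
    rw [← e2, ← hL, e1]
  have hmem : a ∈ (⊥ : Ideal H) := hM ▸ Module.mem_annihilator.mpr key
  simpa using hmem

end ChainTrivAux

end

open Paper in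
universe u in
/-- A Hopf algebra over a field admitting a faithful simple module has trivial
chain group. -/
theorem chainGroup_trivial_of_faithful_simpleModule
    (k H : Type u) [Field k] [Ring H] [HopfAlgebra k H]
    (M : SimpleMod k H) (hM : Module.annihilator H M.carrier = ⊥) :
    Subsingleton (ChainGroup k H (Bialgebra.comulAlgHom k H)
      (fun a => HopfAlgebra.antipode (R := k) a) (Bialgebra.counitAlgHom k H)) := by
  classical
  set Δ := Bialgebra.comulAlgHom k H with hΔ
  set σ := (fun a : H => HopfAlgebra.antipode (R := k) a) with hσ
  set ε := Bialgebra.counitAlgHom k H with hε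
  set rels := chainRels k H Δ σ ε with hrels
  let E := ChainTrivAux.trivMod k H
  -- image of a relator is 1
  have relone : ∀ r ∈ rels, PresentedGroup.mk rels r = 1 := by
    intro r hr
    exact (QuotientGroup.eq_one_iff r).mpr (Subgroup.subset_normalClosure hr)
  -- first relation: the trivial module
  have h1 : (PresentedGroup.of (rels := rels) ⟦E⟧ : PresentedGroup rels) = 1 := by
    apply relone
    refine Or.inl (Or.inl ⟨E, fun a v => ?_, rfl⟩)
    rw [ChainTrivAux.trivMod_smul, smul_eq_mul]
  -- second relation with M' = M, M'' = E
  have h2 : ∀ P : SimpleMod k H,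
      (PresentedGroup.of (rels := rels) ⟦P⟧ : PresentedGroup rels) =
        PresentedGroup.of (rels := rels) ⟦M⟧ * PresentedGroup.of (rels := rels) ⟦E⟧ := by
    intro P
    have hr : FreeGroup.of (α := SimpleModClass k H) ⟦P⟧ * (FreeGroup.of (α := SimpleModClass k H) ⟦M⟧ * FreeGroup.of (α := SimpleModClass k H) ⟦E⟧)⁻¹ ∈ rels :=
      Or.inl (Or.inr ⟨P, M, E, ChainTrivAux.tensorAnn_triv_subset M hM P, rfl⟩)
    have := relone _ hr
    rw [map_mul, map_inv, map_mul] at this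
    have h' := mul_eq_one_iff_eq_inv.mp this
    rw [inv_inv] at h'
    exact h'
  -- hence g M = 1
  have hMone : (PresentedGroup.of (rels := rels) ⟦M⟧ : PresentedGroup rels) = 1 := by
    have := h2 E
    rw [h1] at this
    have : (1 : PresentedGroup rels) = PresentedGroup.of (rels := rels) ⟦M⟧ * 1 := this
    rw [mul_one] at this
    exact this.symm
  have hall : ∀ c : SimpleModClass k H, (PresentedGroup.of c : PresentedGroup rels) = 1 := by
    intro c
    induction c using Quotient.ind with
    | _ P => rw [h2 P, h1, hMone, one_mul]
  have hmk : PresentedGroup.mk rels = (1 : FreeGroup (SimpleModClass k H) →* PresentedGroup rels) :=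
    FreeGroup.ext_hom _ _ (fun c => hall c)
  constructor
  intro x y
  obtain ⟨w, rfl⟩ := PresentedGroup.mk_surjective rels x
  obtain ⟨w', rfl⟩ := PresentedGroup.mk_surjective rels y
  rw [hmk]
  rfl
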